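/- Let h : ℝ^d → ℝ^d be twice continuously differentiable, x* ∈ ℝ^d with h(x*) = 0, and suppose constants K̃ ≥ 1, λ' > 0 satisfy ‖exp(Dh(x*) t)‖ ≤ K̃ exp(−λ' t) for all t ≥ 0. Fix κ ∈ (0,1) and set λ = ((1−κ)/K̃²) λ'. Let V : U → ℝ be a continuously differentiable Liapunov function for x* on an open set U containing x*, i.e., V(x*) = 0 and, for all x ∈ U with x ≠ x*, V(x) > 0 and ∇V(x)·h(x) < 0. Let r > 0 be such that the sublevel set V^r := {x ∈ U : V(x) ≤ r} is compact, and let φ : [0,∞) × V^r → ℝ^d be a semiflow of the ODE ẋ = h(x), i.e., φ(0,u) = u, (d/dt)φ(t,u) = h(φ(t,u)), and φ(t,u) ∈ V^r for all u ∈ V^r and t ≥ 0. Then there exists a constant K₂ ≥ 0 such that for all u₀ ∈ V^r and all t ≥ 0: ∫₀^t ‖Dh(φ(τ,u₀)) − Dh(x*)‖ dτ ≤ K₂. -/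

import Mathlib

open Set MeasureTheory intervalIntegral Real NormedSpace Filter Topology

set_option maxHeartbeats 1000000
set_option synthInstance.maxHeartbeats 400000
set_option linter.unusedVariables false


lemma gronwall_int_cont {z : ℝ → ℝ} {t₀ t a K : ℝ} (ht : t₀ ≤ t)
    (hz : Continuous z)
    (hz0 : ∀ s, 0 ≤ z s) (hK : 0 ≤ K)
    (hb : ∀ s ∈ Set.Icc t₀ t, z s ≤ a + K * ∫ τ in t₀..s, z τ) :
    z t ≤ a * Real.exp (K * (t - t₀)) := by
  set F : ℝ → ℝ := fun s => ∫ τ in t₀..s, z τ with hF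
  have hFderiv : ∀ x ∈ Ico t₀ t, HasDerivWithinAt F (z x) (Ici x) x := fun x _ =>
    (integral_hasDerivAt_right (hz.intervalIntegrable _ _)
      hz.stronglyMeasurable.stronglyMeasurableAtFilter hz.continuousAt).hasDerivWithinAt
  have hFcont : ContinuousOn F (Icc t₀ t) :=
    (intervalIntegral.continuous_primitive (fun _ _ => hz.intervalIntegrable _ _) t₀).continuousOn
  have hF0 : ∀ x ∈ Icc t₀ t, 0 ≤ F x := by
    intro x hx
    exact intervalIntegral.integral_nonneg hx.1 (fun u _ => hz0 u)
  have ha : 0 ≤ a := le_trans (hz0 t₀) ((hb t₀ ⟨le_refl _, ht⟩).trans (by simp [hF]))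
  have hzt := hb t ⟨ht, le_refl t⟩
  by_cases hK0 : K = 0
  · subst hK0
    have : z t ≤ a := by simpa using hzt
    exact this.trans (le_mul_of_one_le_right ha (Real.one_le_exp (by simp)))
  have hKpos : 0 < K := lt_of_le_of_ne hK (Ne.symm hK0)
  have key := norm_le_gronwallBound_of_norm_deriv_right_le (f := F) (f' := z)
      (δ := 0) (K := K) (ε := a) hFcont hFderiv (by simp [hF]) ?_ t ⟨ht, le_refl t⟩
  · rw [gronwallBound_of_K_ne_0 hK0] at key
    have hFt : F t ≤ a / K * (Real.exp (K * (t - t₀)) - 1) := by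
      calc F t ≤ ‖F t‖ := le_abs_self _
      _ ≤ _ := key.trans_eq (by ring)
    calc z t ≤ a + K * F t := hzt
      _ ≤ a + K * (a / K * (Real.exp (K * (t - t₀)) - 1)) := by nlinarith
      _ = a * Real.exp (K * (t - t₀)) := by field_simp; ring
  · intro x hx
    rw [Real.norm_of_nonneg (hz0 x), Real.norm_of_nonneg (hF0 x ⟨hx.1, hx.2.le⟩)]
    linarith [hb x ⟨hx.1, hx.2.le⟩]

lemma duhamel_norm_bound {E : Type*} [NormedAddCommGroup E] [NormedSpace ℝ E] [CompleteSpace E]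
    (A : E →L[ℝ] E) {Ktil lam' : ℝ}
    (hexp : ∀ t : ℝ, 0 ≤ t → ‖NormedSpace.exp (t • A)‖ ≤ Ktil * Real.exp (-lam' * t))
    {y g : ℝ → E} {t₀ t : ℝ} (ht : t₀ ≤ t)
    (hyd : ∀ s ∈ Icc t₀ t, HasDerivAt y (A (y s) + g s) s)
    (hg : ContinuousOn g (Icc t₀ t)) :
    ‖y t‖ ≤ Ktil * Real.exp (-lam' * (t - t₀)) * ‖y t₀‖
      + ∫ s in t₀..t, Ktil * Real.exp (-lam' * (t - s)) * ‖g s‖ := by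
  have hexpc : Continuous fun s : ℝ => NormedSpace.exp (s • (-A)) := by
    refine continuous_iff_continuousAt.2 fun s => ?_
    exact (hasDerivAt_exp_smul_const (-A) s).continuousAt
  set w : ℝ → E := fun s => NormedSpace.exp (s • (-A)) (y s) with hw
  have hwderiv : ∀ s ∈ Icc t₀ t, HasDerivAt w (NormedSpace.exp (s • (-A)) (g s)) s := by
    intro s hs
    have h1 := hasDerivAt_exp_smul_const (𝕂 := ℝ) (-A) s
    have h2 := h1.clm_apply (hyd s hs)
    convert h2 using 1
    simp [ContinuousLinearMap.mul_apply, map_add]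
  have hgc : ContinuousOn (fun s => NormedSpace.exp (s • (-A)) (g s)) (Icc t₀ t) :=
    (hexpc.continuousOn).clm_apply hg
  have hFTC : (∫ s in t₀..t, NormedSpace.exp (s • (-A)) (g s)) = w t - w t₀ := by
    refine integral_eq_sub_of_hasDerivAt (fun s hs => hwderiv s (by rwa [uIcc_of_le ht] at hs)) ?_
    exact (hgc.mono (by rw [uIcc_of_le ht])).intervalIntegrable
  have hcomm : ∀ u v : ℝ, Commute (u • A) (v • (-A)) :=
    fun u v => (((Commute.refl A).neg_right).smul_left u).smul_right v
  have hinv : ∀ s : ℝ, ∀ x : E, NormedSpace.exp (s • A) (NormedSpace.exp (s • (-A)) x) = x := by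
    intro s x
    letI : NormedAlgebra ℚ (E →L[ℝ] E) := .restrictScalars ℚ ℝ (E →L[ℝ] E)
    have := NormedSpace.exp_add_of_commute (hcomm s s)
    rw [show s • A + s • (-A) = 0 by simp] at this
    rw [← ContinuousLinearMap.mul_apply, ← this, NormedSpace.exp_zero,
      ContinuousLinearMap.one_apply]
  have hyt : y t = NormedSpace.exp (t • A) (w t₀)
      + ∫ s in t₀..t, NormedSpace.exp (t • A) (NormedSpace.exp (s • (-A)) (g s)) := by
    rw [(NormedSpace.exp (t • A)).intervalIntegral_comp_comm
      ((hgc.mono (by rw [uIcc_of_le ht])).intervalIntegrable), hFTC]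
    simp only [map_sub]
    rw [hinv t (y t)]
    abel
  have hsplit : ∀ u v : ℝ, NormedSpace.exp (u • A) ∘L NormedSpace.exp (v • (-A))
      = NormedSpace.exp ((u - v) • A) := by
    intro u v
    letI : NormedAlgebra ℚ (E →L[ℝ] E) := .restrictScalars ℚ ℝ (E →L[ℝ] E)
    rw [show (u - v) • A = u • A + v • (-A) by rw [smul_neg, sub_smul]; abel,
      NormedSpace.exp_add_of_commute (hcomm u v)]
    rfl
  have happ : ∀ u v : ℝ, ∀ x : E, NormedSpace.exp (u • A) (NormedSpace.exp (v • (-A)) x)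
      = NormedSpace.exp ((u - v) • A) x := by
    intro u v x
    rw [← hsplit u v]; rfl
  rw [hyt]
  have hterm1 : ‖NormedSpace.exp (t • A) (w t₀)‖ ≤ Ktil * Real.exp (-lam' * (t - t₀)) * ‖y t₀‖ := by
    rw [hw]
    simp only []
    rw [happ t t₀ (y t₀)]
    calc ‖NormedSpace.exp ((t - t₀) • A) (y t₀)‖
        ≤ ‖NormedSpace.exp ((t - t₀) • A)‖ * ‖y t₀‖ := ContinuousLinearMap.le_opNorm _ _
      _ ≤ Ktil * Real.exp (-lam' * (t - t₀)) * ‖y t₀‖ :=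
          mul_le_mul_of_nonneg_right (hexp _ (by linarith)) (norm_nonneg _)
  have hterm2 : ‖∫ s in t₀..t, NormedSpace.exp (t • A) (NormedSpace.exp (s • (-A)) (g s))‖
      ≤ ∫ s in t₀..t, Ktil * Real.exp (-lam' * (t - s)) * ‖g s‖ := by
    have habs : |∫ s in t₀..t, Ktil * Real.exp (-lam' * (t - s)) * ‖g s‖|
        = ∫ s in t₀..t, Ktil * Real.exp (-lam' * (t - s)) * ‖g s‖ := by
      refine abs_of_nonneg (intervalIntegral.integral_nonneg ht fun u _ => ?_)
      have hK0 : 0 ≤ Ktil := le_trans (by positivity) ((norm_nonneg (NormedSpace.exp ((0:ℝ) • A))).trans (by simpa using hexp 0 le_rfl))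
      positivity
    refine intervalIntegral.norm_integral_le_of_norm_le ht ?_ ?_
    · refine ae_of_all _ fun s hs => ?_
      rw [happ t s (g s)]
      calc ‖NormedSpace.exp ((t - s) • A) (g s)‖
          ≤ ‖NormedSpace.exp ((t - s) • A)‖ * ‖g s‖ := ContinuousLinearMap.le_opNorm _ _
        _ ≤ Ktil * Real.exp (-lam' * (t - s)) * ‖g s‖ :=
            mul_le_mul_of_nonneg_right (hexp _ (by linarith [hs.2])) (norm_nonneg _)
    · apply ContinuousOn.intervalIntegrable
      rw [uIcc_of_le ht]
      exact (continuous_const.continuousOn.mul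
        ((Real.continuous_exp.comp (by continuity)).continuousOn)).mul hg.norm
  calc ‖_ + _‖ ≤ ‖NormedSpace.exp (t • A) (w t₀)‖
        + ‖∫ s in t₀..t, NormedSpace.exp (t • A) (NormedSpace.exp (s • (-A)) (g s))‖ :=
      norm_add_le _ _
    _ ≤ _ := add_le_add hterm1 hterm2

lemma decay_core {E : Type*} [NormedAddCommGroup E] [NormedSpace ℝ E] [CompleteSpace E]
    (A : E →L[ℝ] E) {Ktil lam' : ℝ} (hK : 1 ≤ Ktil) (hlam' : 0 < lam')
    (hexp : ∀ t : ℝ, 0 ≤ t → ‖NormedSpace.exp (t • A)‖ ≤ Ktil * Real.exp (-lam' * t))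
    {C ε : ℝ} (hC : 0 ≤ C) (hε : 0 < ε) (hsmall : Ktil * C * ε ≤ lam' / 2)
    {y g : ℝ → E} {t₀ T : ℝ} (hT : t₀ ≤ T)
    (hyd : ∀ s ∈ Icc t₀ T, HasDerivAt y (A (y s) + g s) s)
    (hgc : ContinuousOn g (Icc t₀ T))
    (hgb : ∀ s ∈ Icc t₀ T, ‖g s‖ ≤ C * ε * ‖y s‖) :
    ∀ t ∈ Icc t₀ T, ‖y t‖ ≤ Ktil * ‖y t₀‖ * Real.exp (-(lam' / 2) * (t - t₀)) := by
  intro t htmem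
  have hyc : ContinuousOn y (Icc t₀ T) := fun s hs => (hyd s hs).continuousAt.continuousWithinAt
  -- the truncated z function, globally continuous
  set P : ℝ → ℝ := fun s => min (max s t₀) T with hP
  have hPcont : Continuous P := (continuous_id.max continuous_const).min continuous_const
  have hPmem : ∀ s, P s ∈ Icc t₀ T := fun s => ⟨le_min (le_max_right _ _) hT, min_le_right _ _⟩
  have hPid : ∀ s ∈ Icc t₀ T, P s = s := fun s hs => by
    simp [hP, max_eq_left hs.1, min_eq_left hs.2]
  set z : ℝ → ℝ := fun s => Real.exp (lam' * P s) * ‖y (P s)‖ with hz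
  have hzc : Continuous z := by
    have : ContinuousOn (fun s => Real.exp (lam' * s) * ‖y s‖) (Icc t₀ T) :=
      ((Real.continuous_exp.comp (continuous_const.mul continuous_id)).continuousOn).mul hyc.norm
    exact this.comp_continuous hPcont hPmem
  have hz0 : ∀ s, 0 ≤ z s := fun s => by positivity
  have hzeq : ∀ s ∈ Icc t₀ T, z s = Real.exp (lam' * s) * ‖y s‖ := fun s hs => by
    simp only [hz, hPid s hs]
  set Kc := Ktil * C * ε with hKc
  have hKc0 : 0 ≤ Kc := by positivity
  have hKtil0 : (0:ℝ) < Ktil := lt_of_lt_of_le one_pos hK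
  -- main integral inequality for z on [t₀, t]
  have hmain : ∀ s ∈ Icc t₀ t, z s ≤ Ktil * z t₀ + Kc * ∫ τ in t₀..s, z τ := by
    intro s hs
    have hsmem : s ∈ Icc t₀ T := ⟨hs.1, hs.2.trans htmem.2⟩
    have duh := duhamel_norm_bound A hexp hs.1
      (fun u hu => hyd u ⟨hu.1, hu.2.trans hsmem.2⟩)
      (hgc.mono (Icc_subset_Icc le_rfl hsmem.2))
    have hz0T : z t₀ = Real.exp (lam' * t₀) * ‖y t₀‖ := hzeq t₀ ⟨le_rfl, hT⟩
    -- multiply duh by exp (lam' * s)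
    have hint1 : (∫ u in t₀..s, Ktil * Real.exp (-lam' * (s - u)) * ‖g u‖)
        ≤ ∫ u in t₀..s, Real.exp (-lam' * s) * (Kc * z u) := by
      refine intervalIntegral.integral_mono_on hs.1 ?_ ?_ ?_
      · apply ContinuousOn.intervalIntegrable
        rw [uIcc_of_le hs.1]
        exact (continuous_const.continuousOn.mul ((Real.continuous_exp.comp
          (by continuity)).continuousOn)).mul
          ((hgc.mono (Icc_subset_Icc le_rfl hsmem.2)).norm)
      · apply ContinuousOn.intervalIntegrable
        exact (continuous_const.mul (continuous_const.mul hzc)).continuousOn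
      · intro u hu
        have humem : u ∈ Icc t₀ T := ⟨hu.1, hu.2.trans hsmem.2⟩
        have h1 : ‖g u‖ ≤ C * ε * ‖y u‖ := hgb u humem
        have h2 : z u = Real.exp (lam' * u) * ‖y u‖ := hzeq u humem
        have he : Real.exp (-lam' * (s - u)) = Real.exp (-lam' * s) * Real.exp (lam' * u) := by
          rw [← Real.exp_add]; ring_nf
        rw [he, h2, hKc]
        have hyu0 : (0:ℝ) ≤ ‖y u‖ := norm_nonneg _
        have hexp1 : (0:ℝ) < Real.exp (-lam' * s) := Real.exp_pos _
        have hexp2 : (0:ℝ) < Real.exp (lam' * u) := Real.exp_pos _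
        nlinarith [mul_le_mul_of_nonneg_left h1 (le_of_lt (mul_pos hexp1 hexp2)),
          mul_pos hexp1 hexp2]
    have hint2 : (∫ u in t₀..s, Real.exp (-lam' * s) * (Kc * z u))
        = Real.exp (-lam' * s) * Kc * ∫ u in t₀..s, z u := by
      rw [← intervalIntegral.integral_const_mul]
      congr 1; ext u; ring
    have hs1 : z s = Real.exp (lam' * s) * ‖y s‖ := hzeq s hsmem
    rw [hs1]
    have hstep : Real.exp (lam' * s) * ‖y s‖
        ≤ Real.exp (lam' * s) * (Ktil * Real.exp (-lam' * (s - t₀)) * ‖y t₀‖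
          + Real.exp (-lam' * s) * Kc * ∫ u in t₀..s, z u) := by
      refine mul_le_mul_of_nonneg_left (duh.trans ?_) (Real.exp_pos _).le
      have := hint1.trans_eq hint2
      linarith
    refine hstep.trans (le_of_eq ?_)
    have he1 : Real.exp (lam' * s) * (Ktil * Real.exp (-lam' * (s - t₀)) * ‖y t₀‖)
        = Ktil * (Real.exp (lam' * t₀) * ‖y t₀‖) := by
      rw [show -lam' * (s - t₀) = lam' * t₀ - lam' * s by ring, Real.exp_sub]
      field_simp
    rw [mul_add, he1, hz0T]
    rw [show Real.exp (lam' * s) * (Real.exp (-lam' * s) * Kc * ∫ u in t₀..s, z u)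
      = (Real.exp (lam' * s) * Real.exp (-lam' * s)) * (Kc * ∫ u in t₀..s, z u) by ring,
      ← Real.exp_add]
    simp
  have hgr := gronwall_int_cont htmem.1 hzc hz0 hKc0 hmain
  -- unfold and finish
  have hzt : z t = Real.exp (lam' * t) * ‖y t‖ := hzeq t htmem
  have hz0T : z t₀ = Real.exp (lam' * t₀) * ‖y t₀‖ := hzeq t₀ ⟨le_rfl, hT⟩
  rw [hzt, hz0T] at hgr
  have hyt : ‖y t‖ ≤ Ktil * ‖y t₀‖ * Real.exp (lam' * t₀ - lam' * t + Kc * (t - t₀)) := by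
    have hepos : (0:ℝ) < Real.exp (lam' * t) := Real.exp_pos _
    have h2 : Real.exp (lam' * t) * (Ktil * ‖y t₀‖ * Real.exp (lam' * t₀ - lam' * t + Kc * (t - t₀)))
        = Ktil * (Real.exp (lam' * t₀) * ‖y t₀‖) * Real.exp (Kc * (t - t₀)) := by
      rw [show lam' * t₀ - lam' * t + Kc * (t - t₀) = (lam' * t₀ + Kc * (t - t₀)) - lam' * t by ring,
        Real.exp_sub, Real.exp_add]
      field_simp
    exact le_of_mul_le_mul_left (hgr.trans_eq h2.symm) hepos
  refine hyt.trans ?_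
  have hKy : 0 ≤ Ktil * ‖y t₀‖ := by positivity
  refine mul_le_mul_of_nonneg_left (Real.exp_le_exp.2 ?_) hKy
  have htsub : 0 ≤ t - t₀ := by linarith [htmem.1]
  nlinarith

lemma decay_global {E : Type*} [NormedAddCommGroup E] [NormedSpace ℝ E] [CompleteSpace E]
    (A : E →L[ℝ] E) {Ktil lam' : ℝ} (hK : 1 ≤ Ktil) (hlam' : 0 < lam')
    (hexp : ∀ t : ℝ, 0 ≤ t → ‖NormedSpace.exp (t • A)‖ ≤ Ktil * Real.exp (-lam' * t))
    {C ε : ℝ} (hC : 0 ≤ C) (hε : 0 < ε) (hsmall : Ktil * C * ε ≤ lam' / 2)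
    {y g : ℝ → E} {t₀ : ℝ}
    (hyd : ∀ s, t₀ ≤ s → HasDerivAt y (A (y s) + g s) s)
    (hgc : ContinuousOn g (Ici t₀))
    (hgb : ∀ s, t₀ ≤ s → ‖y s‖ ≤ ε → ‖g s‖ ≤ C * ε * ‖y s‖)
    (hy0 : ‖y t₀‖ ≤ ε / (2 * Ktil)) :
    ∀ t, t₀ ≤ t → ‖y t‖ ≤ Ktil * ‖y t₀‖ * Real.exp (-(lam' / 2) * (t - t₀)) := by
  have hKtil0 : (0:ℝ) < Ktil := lt_of_lt_of_le one_pos hK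
  have hy0' : ‖y t₀‖ ≤ ε / 2 := hy0.trans (by
    rw [div_le_div_iff₀ (by positivity) (by norm_num)]
    nlinarith)
  have hcore : ∀ T, t₀ ≤ T → (∀ s ∈ Icc t₀ T, ‖y s‖ ≤ ε) →
      ∀ t ∈ Icc t₀ T, ‖y t‖ ≤ Ktil * ‖y t₀‖ * Real.exp (-(lam' / 2) * (t - t₀)) := by
    intro T hT hbdd
    exact decay_core A hK hlam' hexp hC hε hsmall hT
      (fun s hs => hyd s hs.1) (hgc.mono Icc_subset_Ici_self)
      (fun s hs => hgb s hs.1 (hbdd s hs))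
  have hhalf : ∀ T, t₀ ≤ T → (∀ s ∈ Icc t₀ T, ‖y s‖ ≤ ε) → ‖y T‖ ≤ ε / 2 := by
    intro T hT hbdd
    have := hcore T hT hbdd T ⟨hT, le_rfl⟩
    refine this.trans ?_
    calc Ktil * ‖y t₀‖ * Real.exp (-(lam' / 2) * (T - t₀))
        ≤ Ktil * (ε / (2 * Ktil)) * 1 := by
          apply mul_le_mul (mul_le_mul_of_nonneg_left hy0 hKtil0.le)
            (Real.exp_le_one_iff.2 (by nlinarith)) (Real.exp_pos _).le (by positivity)
      _ = ε / 2 := by field_simp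
  -- bootstrap: ‖y t‖ ≤ ε for all t ≥ t₀
  have hbound : ∀ t, t₀ ≤ t → ‖y t‖ ≤ ε := by
    by_contra hcon
    push_neg at hcon
    set B : Set ℝ := {s | t₀ ≤ s ∧ ε < ‖y s‖} with hB
    have hBne : B.Nonempty := by
      obtain ⟨t, ht, hlt⟩ := hcon
      exact ⟨t, ht, hlt⟩
    have hBbd : BddBelow B := ⟨t₀, fun s hs => hs.1⟩
    set τ := sInf B with hτ
    have hτt₀ : t₀ ≤ τ := le_csInf hBne fun s hs => hs.1
    have hτcl : τ ∈ closure B := csInf_mem_closure hBne hBbd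
    have hyτcont : ContinuousAt y τ := (hyd τ hτt₀).continuousAt
    -- below τ the norm is ≤ ε
    have hbelow : ∀ s, t₀ ≤ s → s < τ → ‖y s‖ ≤ ε := by
      intro s hs hsτ
      by_contra hgt
      push_neg at hgt
      exact absurd (csInf_le hBbd ⟨hs, hgt⟩) (not_le.2 hsτ)
    -- ‖y τ‖ ≤ ε
    have hyτle : ‖y τ‖ ≤ ε := by
      rcases eq_or_lt_of_le hτt₀ with heq | hlt
      · rw [← heq]; linarith
      · have hne : (𝓝[Ico t₀ τ] τ).NeBot := by
          rw [← mem_closure_iff_nhdsWithin_neBot, closure_Ico hlt.ne]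
          exact ⟨hτt₀, le_rfl⟩
        haveI := hne
        refine le_of_tendsto ((hyτcont.norm.continuousWithinAt (s := Ico t₀ τ)).tendsto) ?_
        exact eventually_nhdsWithin_of_forall fun s hs => hbelow s hs.1 hs.2
    -- hence ≤ ε on all of [t₀, τ], so ‖y τ‖ ≤ ε/2
    have hIcc : ∀ s ∈ Icc t₀ τ, ‖y s‖ ≤ ε := by
      intro s hs
      rcases eq_or_lt_of_le hs.2 with heq | hlt
      · rw [heq]; exact hyτle
      · exact hbelow s hs.1 hlt
    have hτhalf : ‖y τ‖ ≤ ε / 2 := hhalf τ hτt₀ hIcc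
    -- but τ ∈ closure B forces ‖y τ‖ ≥ ε
    have hτge : ε ≤ ‖y τ‖ := by
      haveI : (𝓝[B] τ).NeBot := mem_closure_iff_nhdsWithin_neBot.1 hτcl
      refine ge_of_tendsto ((hyτcont.norm.continuousWithinAt (s := B)).tendsto) ?_
      exact eventually_nhdsWithin_of_forall fun s hs => hs.2.le
    linarith
  intro t ht
  exact hcore t ht (fun s hs => hbound s hs.1) t ⟨ht, le_rfl⟩

lemma psi_decrease {ψ ψd : ℝ → ℝ} {T m : ℝ} (hT : 0 ≤ T)
    (hd : ∀ s ∈ Icc (0:ℝ) T, HasDerivAt ψ (ψd s) s)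
    (hm : ∀ s ∈ Icc (0:ℝ) T, ψd s ≤ -m) : ψ T + m * T ≤ ψ 0 := by
  set χ : ℝ → ℝ := fun s => ψ s + m * s with hχ
  have hχd : ∀ s ∈ Icc (0:ℝ) T, HasDerivAt χ (ψd s + m) s := fun s hs =>
    (hd s hs).add (by simpa using (hasDerivAt_id s).const_mul m)
  have hχa : AntitoneOn χ (Icc 0 T) := by
    refine antitoneOn_of_deriv_nonpos (convex_Icc 0 T) ?_ ?_ ?_
    · exact fun s hs => (hχd s hs).continuousAt.continuousWithinAt
    · intro s hs
      rw [interior_Icc] at hs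
      exact (hχd s ⟨hs.1.le, hs.2.le⟩).differentiableAt.differentiableWithinAt
    · intro s hs
      rw [interior_Icc] at hs
      rw [(hχd s ⟨hs.1.le, hs.2.le⟩).deriv]
      linarith [hm s ⟨hs.1.le, hs.2.le⟩]
  have := hχa ⟨le_rfl, hT⟩ ⟨hT, le_rfl⟩ hT
  simpa [hχ] using this

lemma inner_gradient_eq {E : Type*} [NormedAddCommGroup E] [InnerProductSpace ℝ E]
    [CompleteSpace E] (f : E → ℝ) (x v : E) :
    (inner ℝ (gradient f x) v : ℝ) = fderiv ℝ f x v := by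
  rw [gradient, InnerProductSpace.toDual_symm_apply]

/-- Integrated Jacobian deviation bound along the semiflow on a compact sublevel set of
a Liapunov function near an equilibrium x* of ẋ = h(x) (Lemma "BoundDh"):
∃ K₂ ≥ 0 such that ∫₀^t ‖Dh(φ(τ,u₀)) − Dh(x*)‖ dτ ≤ K₂ for all u₀ in the sublevel set
V^r and all t ≥ 0. -/
theorem stmt12 {d : ℕ}
    (h : EuclideanSpace ℝ (Fin d) → EuclideanSpace ℝ (Fin d))
    (hh : ContDiff ℝ 2 h)
    (xstar : EuclideanSpace ℝ (Fin d)) (hzero : h xstar = 0)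
    (Ktil lam' : ℝ) (hK : 1 ≤ Ktil) (hlam' : 0 < lam')
    (hexp : ∀ t : ℝ, 0 ≤ t →
      ‖NormedSpace.exp (t • fderiv ℝ h xstar)‖ ≤ Ktil * Real.exp (-lam' * t))
    (κ : ℝ) (hκ : κ ∈ Set.Ioo (0 : ℝ) 1)
    (lam : ℝ) (hlamdef : lam = ((1 - κ) / Ktil ^ 2) * lam')
    (U : Set (EuclideanSpace ℝ (Fin d))) (hU : IsOpen U) (hxU : xstar ∈ U)
    (V : EuclideanSpace ℝ (Fin d) → ℝ) (hV : ContDiffOn ℝ 1 V U)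
    (hVzero : V xstar = 0)
    (hVpos : ∀ x ∈ U, x ≠ xstar →
      0 < V x ∧ (inner ℝ (gradient V x) (h x) : ℝ) < 0)
    (r : ℝ) (hr : 0 < r)
    (hcompact : IsCompact {x ∈ U | V x ≤ r})
    (φ : ℝ → EuclideanSpace ℝ (Fin d) → EuclideanSpace ℝ (Fin d))
    (hφ0 : ∀ u ∈ {x ∈ U | V x ≤ r}, φ 0 u = u)
    (hφd : ∀ u ∈ {x ∈ U | V x ≤ r}, ∀ t : ℝ, 0 ≤ t →
      HasDerivAt (fun τ => φ τ u) (h (φ t u)) t)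
    (hφin : ∀ u ∈ {x ∈ U | V x ≤ r}, ∀ t : ℝ, 0 ≤ t → φ t u ∈ {x ∈ U | V x ≤ r}) :
    ∃ K₂ : ℝ, 0 ≤ K₂ ∧
      ∀ u₀ ∈ {x ∈ U | V x ≤ r}, ∀ t : ℝ, 0 ≤ t →
        (∫ τ in (0 : ℝ)..t, ‖fderiv ℝ h (φ τ u₀) - fderiv ℝ h xstar‖) ≤ K₂ := by
  set S := {x ∈ U | V x ≤ r} with hSdef
  set A := fderiv ℝ h xstar with hAdef
  have hKtil0 : (0:ℝ) < Ktil := lt_of_lt_of_le one_pos hK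
  have hxS : xstar ∈ S := ⟨hxU, by rw [hVzero]; exact hr.le⟩
  -- continuity of the Jacobian
  have hDh1 : ContDiff ℝ 1 (fun x => fderiv ℝ h x) := by
    exact hh.fderiv_right (m := 1) (by norm_num)
  have hDhc : Continuous (fun x => fderiv ℝ h x) := hDh1.continuous
  -- Lipschitz constant for Dh on the unit ball
  obtain ⟨C₁, hC₁0, hLip⟩ : ∃ C₁ : ℝ, 0 ≤ C₁ ∧ ∀ x ∈ Metric.closedBall xstar 1,
      ∀ y ∈ Metric.closedBall xstar 1, ‖fderiv ℝ h x - fderiv ℝ h y‖ ≤ C₁ * ‖x - y‖ := by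
    have hD2c : Continuous (fun x => ‖fderiv ℝ (fun y => fderiv ℝ h y) x‖) :=
      (hDh1.fderiv_right (m := 0) (by norm_num)).continuous.norm
    obtain ⟨z₀, hz₀, hz₀max⟩ := (isCompact_closedBall xstar 1).exists_isMaxOn
      ⟨xstar, Metric.mem_closedBall_self one_pos.le⟩ hD2c.continuousOn
    refine ⟨‖fderiv ℝ (fun y => fderiv ℝ h y) z₀‖, by positivity, fun x hx y hy => ?_⟩
    exact (convex_closedBall xstar 1).norm_image_sub_le_of_norm_fderiv_le
      (fun z _ => (hDh1.differentiable one_ne_zero).differentiableAt)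
      (fun z hz => hz₀max hz) hy hx
  -- Taylor-type bound
  have hTay : ∀ x ∈ Metric.closedBall xstar 1,
      ‖h x - A (x - xstar)‖ ≤ C₁ * ‖x - xstar‖ * ‖x - xstar‖ := by
    intro x hx
    have hρ1 : ‖x - xstar‖ ≤ 1 := by rwa [Metric.mem_closedBall, dist_eq_norm] at hx
    have hsub : Metric.closedBall xstar ‖x - xstar‖ ⊆ Metric.closedBall xstar 1 :=
      Metric.closedBall_subset_closedBall hρ1
    have hkey := (convex_closedBall xstar ‖x - xstar‖).norm_image_sub_le_of_norm_fderiv_le'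
      (f := h) (φ := A) (C := C₁ * ‖x - xstar‖)
      (fun z _ => hh.differentiable (by norm_num) z)
      (fun z hz => by
        have h1 := hLip z (hsub hz) xstar (Metric.mem_closedBall_self one_pos.le)
        have h2 : ‖z - xstar‖ ≤ ‖x - xstar‖ := by
          rwa [Metric.mem_closedBall, dist_eq_norm] at hz
        calc ‖fderiv ℝ h z - A‖ ≤ C₁ * ‖z - xstar‖ := h1
          _ ≤ C₁ * ‖x - xstar‖ := mul_le_mul_of_nonneg_left h2 hC₁0)
      (Metric.mem_closedBall_self (norm_nonneg _))
      (by rw [Metric.mem_closedBall, dist_eq_norm])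
    rw [hzero] at hkey
    simpa using hkey
  -- choice of ε and δ
  set ε := min 1 (lam' / (2 * Ktil * (C₁ + 1))) with hεdef
  have hε : 0 < ε := lt_min one_pos (by positivity)
  have hε1 : ε ≤ 1 := min_le_left _ _
  have hsmall : Ktil * C₁ * ε ≤ lam' / 2 := by
    have h1 : ε ≤ lam' / (2 * Ktil * (C₁ + 1)) := min_le_right _ _
    have h2 : Ktil * C₁ * ε ≤ Ktil * (C₁ + 1) * (lam' / (2 * Ktil * (C₁ + 1))) := by
      apply mul_le_mul (by nlinarith) h1 hε.le (by positivity)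
    calc Ktil * C₁ * ε ≤ Ktil * (C₁ + 1) * (lam' / (2 * Ktil * (C₁ + 1))) := h2
      _ = lam' / 2 := by field_simp
  set δ := ε / (2 * Ktil) with hδdef
  have hδ : 0 < δ := by positivity
  -- the Liapunov derivative function
  set W : EuclideanSpace ℝ (Fin d) → ℝ := fun x => fderiv ℝ V x (h x) with hWdef
  have hWc : ContinuousOn W U := by
    exact (hV.continuousOn_fderiv_of_isOpen hU le_rfl).clm_apply hh.continuous.continuousOn
  have hWneg : ∀ x ∈ U, x ≠ xstar → W x < 0 := by
    intro x hx hne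
    have := (hVpos x hx hne).2
    rwa [inner_gradient_eq] at this
  -- derivative of V along the flow
  have hψd : ∀ u₀ ∈ S, ∀ s : ℝ, 0 ≤ s →
      HasDerivAt (fun τ => V (φ τ u₀)) (W (φ s u₀)) s := by
    intro u₀ hu₀ s hs
    have hxin : φ s u₀ ∈ S := hφin u₀ hu₀ s hs
    have hVd : HasFDerivAt V (fderiv ℝ V (φ s u₀)) (φ s u₀) := by
      exact ((hV.differentiableOn one_ne_zero).differentiableAt
        (hU.mem_nhds hxin.1)).hasFDerivAt
    exact hVd.comp_hasDerivAt s (hφd u₀ hu₀ s hs)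
  -- uniform time to reach the δ-ball
  obtain ⟨T, hT0, hTprop⟩ : ∃ T : ℝ, 0 ≤ T ∧ ∀ u₀ ∈ S, ∃ t₀, 0 ≤ t₀ ∧ t₀ ≤ T ∧
      ‖φ t₀ u₀ - xstar‖ ≤ δ := by
    set K' := S ∩ {x | δ ≤ ‖x - xstar‖} with hK'def
    have hK'c : IsCompact K' := hcompact.inter_right
      (isClosed_le continuous_const (continuous_id.sub continuous_const).norm)
    rcases K'.eq_empty_or_nonempty with hemp | hne
    · refine ⟨0, le_rfl, fun u₀ hu₀ => ⟨0, le_rfl, le_rfl, ?_⟩⟩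
      rw [hφ0 u₀ hu₀]
      by_contra hgt
      push_neg at hgt
      have hmem : u₀ ∈ K' := ⟨hu₀, hgt.le⟩
      rw [hemp] at hmem
      exact hmem
    · obtain ⟨x₀, hx₀K, hx₀max⟩ := hK'c.exists_isMaxOn hne
        (hWc.mono (fun x hx => hx.1.1))
      have hx₀ne : x₀ ≠ xstar := by
        intro heq
        have h2 : δ ≤ ‖x₀ - xstar‖ := hx₀K.2
        rw [heq, sub_self, norm_zero] at h2
        exact absurd h2 (not_le.2 hδ)
      have hm : 0 < -W x₀ := by linarith [hWneg x₀ hx₀K.1.1 hx₀ne]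
      refine ⟨r / (-W x₀) + 1, by positivity, fun u₀ hu₀ => ?_⟩
      by_contra hcon
      push_neg at hcon
      set T' := r / (-W x₀) + 1 with hT'def
      have hT0' : (0:ℝ) ≤ T' := by positivity
      have hK'mem : ∀ s ∈ Icc (0:ℝ) T', φ s u₀ ∈ K' := fun s hs =>
        ⟨hφin u₀ hu₀ s hs.1, (hcon s hs.1 hs.2).le⟩
      have hdec := psi_decrease (ψ := fun τ => V (φ τ u₀)) (ψd := fun s => W (φ s u₀))
        (m := -W x₀) hT0' (fun s hs => hψd u₀ hu₀ s hs.1)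
        (fun s hs => by
          have h3 : W (φ s u₀) ≤ W x₀ := hx₀max (hK'mem s hs)
          linarith)
      have hψT : 0 ≤ V (φ T' u₀) := by
        rcases eq_or_ne (φ T' u₀) xstar with heq | hne2
        · rw [heq, hVzero]
        · exact (hVpos _ (hφin u₀ hu₀ T' hT0').1 hne2).1.le
      have hV0 : V (φ 0 u₀) ≤ r := by rw [hφ0 u₀ hu₀]; exact hu₀.2
      have hmT : -W x₀ * T' = r + (-W x₀) := by
        rw [hT'def, mul_add, mul_one, mul_div_cancel₀ _ (by linarith : -W x₀ ≠ 0)]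
      linarith
  -- uniform bound for the integrand on S
  obtain ⟨M₀, hM₀0, hM₀⟩ : ∃ M₀ : ℝ, 0 ≤ M₀ ∧ ∀ x ∈ S, ‖fderiv ℝ h x - A‖ ≤ M₀ := by
    obtain ⟨z₀, _, hz₀max⟩ := hcompact.exists_isMaxOn ⟨xstar, hxS⟩
      ((hDhc.sub continuous_const).norm.continuousOn)
    exact ⟨‖fderiv ℝ h z₀ - A‖, norm_nonneg _, fun x hx => hz₀max hx⟩
  refine ⟨M₀ * T + 2 * C₁ * ε / lam', by positivity, ?_⟩
  intro u₀ hu₀ t ht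
  obtain ⟨t₀, ht₀0, ht₀T, ht₀δ⟩ := hTprop u₀ hu₀
  -- continuity of the flow and integrand
  have hφc : ContinuousOn (fun τ => φ τ u₀) (Ici (0:ℝ)) := fun s hs =>
    (hφd u₀ hu₀ s hs).continuousAt.continuousWithinAt
  have hFc : ContinuousOn (fun τ => ‖fderiv ℝ h (φ τ u₀) - A‖) (Ici (0:ℝ)) :=
    ((hDhc.comp_continuousOn hφc).sub continuousOn_const).norm
  -- exponential decay after t₀
  have hdecay : ∀ s, t₀ ≤ s →
      ‖φ s u₀ - xstar‖ ≤ (ε / 2) * Real.exp (-(lam' / 2) * (s - t₀)) := by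
    have hyd' : ∀ s, t₀ ≤ s → HasDerivAt (fun τ => φ τ u₀ - xstar)
        (A (φ s u₀ - xstar) + (h (φ s u₀) - A (φ s u₀ - xstar))) s := by
      intro s hs
      have := (hφd u₀ hu₀ s (ht₀0.trans hs)).sub_const xstar
      exact this.congr_deriv (by abel)
    have h1c : ContinuousOn (fun τ => φ τ u₀) (Ici t₀) := hφc.mono (Ici_subset_Ici.2 ht₀0)
    have hgc' : ContinuousOn (fun s => h (φ s u₀) - A (φ s u₀ - xstar)) (Ici t₀) :=
      (hh.continuous.comp_continuousOn h1c).sub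
        (A.continuous.comp_continuousOn (h1c.sub continuousOn_const))
    have hgb' : ∀ s, t₀ ≤ s → ‖φ s u₀ - xstar‖ ≤ ε →
        ‖h (φ s u₀) - A (φ s u₀ - xstar)‖ ≤ C₁ * ε * ‖φ s u₀ - xstar‖ := by
      intro s hs hyε
      have hball : φ s u₀ ∈ Metric.closedBall xstar 1 := by
        rw [Metric.mem_closedBall, dist_eq_norm]
        exact hyε.trans hε1
      have htay := hTay _ hball
      calc ‖h (φ s u₀) - A (φ s u₀ - xstar)‖
          ≤ C₁ * ‖φ s u₀ - xstar‖ * ‖φ s u₀ - xstar‖ := htay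
        _ ≤ C₁ * ε * ‖φ s u₀ - xstar‖ := by
            have hmm := mul_le_mul_of_nonneg_right
              (mul_le_mul_of_nonneg_left hyε hC₁0) (norm_nonneg (φ s u₀ - xstar))
            linarith
    have hy0' : ‖φ t₀ u₀ - xstar‖ ≤ ε / (2 * Ktil) := ht₀δ
    have hdec := decay_global A hK hlam' hexp hC₁0 hε hsmall hyd' hgc' hgb' hy0'
    intro s hs
    have hds := hdec s hs
    refine hds.trans ?_
    have hKy : Ktil * ‖φ t₀ u₀ - xstar‖ ≤ ε / 2 := by
      calc Ktil * ‖φ t₀ u₀ - xstar‖ ≤ Ktil * δ := mul_le_mul_of_nonneg_left ht₀δ hKtil0.le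
        _ = ε / 2 := by rw [hδdef]; field_simp
    have hexpnn := (Real.exp_pos (-(lam' / 2) * (s - t₀))).le
    nlinarith
  -- integral bounds
  have hIbdd : ∀ a b : ℝ, 0 ≤ a → a ≤ b →
      (∫ τ in a..b, ‖fderiv ℝ h (φ τ u₀) - A‖) ≤ M₀ * (b - a) := by
    intro a b ha hab
    have hint : IntervalIntegrable (fun τ => ‖fderiv ℝ h (φ τ u₀) - A‖) volume a b := by
      apply ContinuousOn.intervalIntegrable
      exact hFc.mono (by rw [uIcc_of_le hab]; exact fun x hx => ha.trans hx.1)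
    calc (∫ τ in a..b, ‖fderiv ℝ h (φ τ u₀) - A‖) ≤ ∫ _ in a..b, M₀ := by
          refine intervalIntegral.integral_mono_on hab hint intervalIntegrable_const ?_
          intro τ hτ
          exact hM₀ _ (hφin u₀ hu₀ τ (ha.trans hτ.1))
      _ = M₀ * (b - a) := by rw [intervalIntegral.integral_const, smul_eq_mul, mul_comm]
  have hItail : ∀ b : ℝ, t₀ ≤ b →
      (∫ τ in t₀..b, ‖fderiv ℝ h (φ τ u₀) - A‖) ≤ 2 * C₁ * ε / lam' := by
    intro b hb
    set μ := lam' / 2 with hμdef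
    have hμ0 : 0 < μ := by positivity
    have hbound : ∀ τ ∈ Icc t₀ b, ‖fderiv ℝ h (φ τ u₀) - A‖
        ≤ C₁ * (ε / 2) * Real.exp (-μ * (τ - t₀)) := by
      intro τ hτ
      have hyτ := hdecay τ hτ.1
      have hexple : Real.exp (-(lam' / 2) * (τ - t₀)) ≤ 1 :=
        Real.exp_le_one_iff.2 (by nlinarith [hτ.1, hμ0])
      have hyε : ‖φ τ u₀ - xstar‖ ≤ ε := by nlinarith [hε]
      have hball : φ τ u₀ ∈ Metric.closedBall xstar 1 := by
        rw [Metric.mem_closedBall, dist_eq_norm]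
        exact hyε.trans hε1
      have hlip := hLip _ hball xstar (Metric.mem_closedBall_self one_pos.le)
      calc ‖fderiv ℝ h (φ τ u₀) - A‖ ≤ C₁ * ‖φ τ u₀ - xstar‖ := hlip
        _ ≤ C₁ * ((ε / 2) * Real.exp (-(lam' / 2) * (τ - t₀))) :=
            mul_le_mul_of_nonneg_left hyτ hC₁0
        _ = C₁ * (ε / 2) * Real.exp (-μ * (τ - t₀)) := by rw [hμdef]; ring
    have hcontb : Continuous (fun τ : ℝ => C₁ * (ε / 2) * Real.exp (-μ * (τ - t₀))) :=
      continuous_const.mul (Real.continuous_exp.comp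
        (continuous_const.mul (continuous_id.sub continuous_const)))
    have hFTCderiv : ∀ τ ∈ uIcc t₀ b, HasDerivAt
        (fun τ => -(C₁ * (ε / 2) / μ) * Real.exp (-μ * (τ - t₀)))
        (C₁ * (ε / 2) * Real.exp (-μ * (τ - t₀))) τ := by
      intro τ _
      have h1 : HasDerivAt (fun τ : ℝ => -μ * (τ - t₀)) (-μ) τ := by
        simpa using ((hasDerivAt_id τ).sub_const t₀).const_mul (-μ)
      have h2 := (h1.exp).const_mul (-(C₁ * (ε / 2) / μ))
      refine h2.congr_deriv ?_
      field_simp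
    have hFTC : (∫ τ in t₀..b, C₁ * (ε / 2) * Real.exp (-μ * (τ - t₀)))
        = -(C₁ * (ε / 2) / μ) * Real.exp (-μ * (b - t₀))
          - (-(C₁ * (ε / 2) / μ) * Real.exp (-μ * (t₀ - t₀))) := by
      exact intervalIntegral.integral_eq_sub_of_hasDerivAt hFTCderiv
        (hcontb.intervalIntegrable _ _)
    have hint : IntervalIntegrable (fun τ => ‖fderiv ℝ h (φ τ u₀) - A‖) volume t₀ b := by
      apply ContinuousOn.intervalIntegrable
      exact hFc.mono (by rw [uIcc_of_le hb]; exact fun x hx => ht₀0.trans hx.1)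
    calc (∫ τ in t₀..b, ‖fderiv ℝ h (φ τ u₀) - A‖)
        ≤ ∫ τ in t₀..b, C₁ * (ε / 2) * Real.exp (-μ * (τ - t₀)) :=
          intervalIntegral.integral_mono_on hb hint (hcontb.intervalIntegrable _ _) hbound
      _ = -(C₁ * (ε / 2) / μ) * Real.exp (-μ * (b - t₀))
          - (-(C₁ * (ε / 2) / μ) * Real.exp (-μ * (t₀ - t₀))) := hFTC
      _ ≤ 2 * C₁ * ε / lam' := by
          have hc0 : 0 ≤ C₁ * (ε / 2) / μ := by positivity
          have hexple : Real.exp (-μ * (b - t₀)) ≤ 1 :=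
            Real.exp_le_one_iff.2 (by nlinarith [hμ0, hb])
          have hexppos := (Real.exp_pos (-μ * (b - t₀))).le
          have hle : -(C₁ * (ε / 2) / μ) * Real.exp (-μ * (b - t₀))
              - (-(C₁ * (ε / 2) / μ) * Real.exp (-μ * (t₀ - t₀))) ≤ C₁ * (ε / 2) / μ := by
            rw [show (-μ * (t₀ - t₀)) = 0 by ring, Real.exp_zero]
            nlinarith
          refine hle.trans ?_
          rw [hμdef]
          have heq2 : C₁ * (ε / 2) / (lam' / 2) = C₁ * ε / lam' := by
            rw [div_eq_div_iff (by positivity) (by positivity)]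
            ring
          rw [heq2]
          refine (div_le_div_iff_of_pos_right hlam').2 ?_
          nlinarith [mul_nonneg hC₁0 hε.le]
  rcases le_or_gt t t₀ with hcase | hcase
  · have := hIbdd 0 t le_rfl ht
    have h2 : M₀ * (t - 0) ≤ M₀ * T := by
      apply mul_le_mul_of_nonneg_left _ hM₀0
      linarith
    have h3 : (0:ℝ) ≤ 2 * C₁ * ε / lam' := by positivity
    linarith
  · have hsplit : (∫ τ in (0:ℝ)..t, ‖fderiv ℝ h (φ τ u₀) - A‖)
        = (∫ τ in (0:ℝ)..t₀, ‖fderiv ℝ h (φ τ u₀) - A‖)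
          + ∫ τ in t₀..t, ‖fderiv ℝ h (φ τ u₀) - A‖ := by
      refine (intervalIntegral.integral_add_adjacent_intervals ?_ ?_).symm
      · apply ContinuousOn.intervalIntegrable
        exact hFc.mono (by rw [uIcc_of_le ht₀0]; exact Icc_subset_Ici_self)
      · apply ContinuousOn.intervalIntegrable
        refine hFc.mono (by rw [uIcc_of_le hcase.le]; exact fun x hx => le_trans ht₀0 hx.1)
    rw [hsplit]
    have h1 := hIbdd 0 t₀ le_rfl ht₀0
    have h2 := hItail t hcase.le
    have h3 : M₀ * (t₀ - 0) ≤ M₀ * T := by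
      apply mul_le_mul_of_nonneg_left _ hM₀0
      linarith
    linarith
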